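/- Let W : ℝ² → ℝ² be continuously differentiable with compact support, let Δ ⊂ ℝ² be a bounded measurable set, let ψ : ℝ × ℝ² → ℝ and v : ℝ × ℝ² → ℝ² be twice continuously differentiable. Write ψ = ψ(0, ·), v = v(0, ·), ψ̇(x) = d/dt|_{t=0} ψ(t, F_t(x)), v̇(x) = d/dt|_{t=0} v(t, F_t(x)). Then the map t ↦ ∫_{F_t(Δ)} ψ(t,·)(y) · div(v(t,·))(y) dy is differentiable at t = 0 and its derivative equals ∫_Δ [ ψ̇(x) div v(x) + ψ(x) div v̇(x) − ψ(x) (∇v(x))^⊤ : ∇W(x) + div W(x) · ψ(x) div v(x) ] dx. -/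

import Mathlib

open MeasureTheory

/-- Jacobian matrix of a vector field on `ℝ²`: `(jac v x) i j = ∂ v_i / ∂ x_j`. -/
noncomputable def jac (v : EuclideanSpace ℝ (Fin 2) → EuclideanSpace ℝ (Fin 2))
    (x : EuclideanSpace ℝ (Fin 2)) : Matrix (Fin 2) (Fin 2) ℝ :=
  Matrix.of fun i j => fderiv ℝ v x (EuclideanSpace.single j (1 : ℝ)) i

/-- Divergence of a vector field: the trace of its Jacobian. -/
noncomputable def divg (v : EuclideanSpace ℝ (Fin 2) → EuclideanSpace ℝ (Fin 2))
    (x : EuclideanSpace ℝ (Fin 2)) : ℝ :=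
  Matrix.trace (jac v x)

/-- Frobenius inner product of matrices: `A : B = ∑_{j,k} A_{jk} B_{jk}`. -/
def frob (A B : Matrix (Fin 2) (Fin 2) ℝ) : ℝ :=
  ∑ j, ∑ k, A j k * B j k


noncomputable section
abbrev E2 : Type := EuclideanSpace ℝ (Fin 2)

/-- The "trace in the space slot" functional on maps `ℝ × E2 →L E2`. -/
def Tdiv : ((ℝ × E2) →L[ℝ] E2) →L[ℝ] ℝ :=
  ∑ j : Fin 2, (EuclideanSpace.proj j).comp
    ((ContinuousLinearMap.apply ℝ E2) ((0 : ℝ), EuclideanSpace.single j (1 : ℝ)))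

lemma Tdiv_apply (L : (ℝ × E2) →L[ℝ] E2) :
    Tdiv L = ∑ j : Fin 2, L ((0 : ℝ), EuclideanSpace.single j (1 : ℝ)) j := by
  simp [Tdiv]

lemma fderiv_slice {F : Type*} [NormedAddCommGroup F] [NormedSpace ℝ F]
    (v : ℝ × E2 → F) (hv : Differentiable ℝ v) (t : ℝ) (y : E2) :
    fderiv ℝ (fun z => v (t, z)) y
      = (fderiv ℝ v (t, y)).comp (ContinuousLinearMap.inr ℝ ℝ E2) := by
  have h : HasFDerivAt (fun z : E2 => v (t, z))
      ((fderiv ℝ v (t, y)).comp (ContinuousLinearMap.inr ℝ ℝ E2)) y :=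
    (hv (t, y)).hasFDerivAt.comp y (HasFDerivAt.prodMk (hasFDerivAt_const t y) (hasFDerivAt_id y))
  exact h.fderiv

lemma divg_slice (v : ℝ × E2 → E2) (hv : Differentiable ℝ v) (t : ℝ) (y : E2) :
    divg (fun z => v (t, z)) y = Tdiv (fderiv ℝ v (t, y)) := by
  rw [Tdiv_apply]
  simp only [divg, jac, Matrix.trace, Matrix.diag]
  rw [fderiv_slice v hv t y]
  rfl

lemma det_perturb (W : E2 → E2) (hW : Differentiable ℝ W) (t : ℝ) (x : E2) :
    (ContinuousLinearMap.id ℝ E2 + t • fderiv ℝ W x).det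
      = 1 + t * Matrix.trace (jac W x) + t ^ 2 * Matrix.det (jac W x) := by
  classical
  set b := (EuclideanSpace.basisFun (Fin 2) ℝ).toBasis
  have hm : LinearMap.toMatrix b b ↑(ContinuousLinearMap.id ℝ E2 + t • fderiv ℝ W x)
      = (1 : Matrix (Fin 2) (Fin 2) ℝ) + t • jac W x := by
    ext i j
    rw [LinearMap.toMatrix_apply]
    simp [b, jac, OrthonormalBasis.coe_toBasis_repr_apply, EuclideanSpace.basisFun_repr,
      EuclideanSpace.basisFun_apply, Matrix.one_apply, EuclideanSpace.single_apply, eq_comm]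
  have : (ContinuousLinearMap.id ℝ E2 + t • fderiv ℝ W x).det
      = ((1 : Matrix (Fin 2) (Fin 2) ℝ) + t • jac W x).det := by
    rw [ContinuousLinearMap.det, ← LinearMap.det_toMatrix b, hm]
  rw [this, Matrix.det_fin_two, Matrix.trace_fin_two, Matrix.det_fin_two]
  simp [Matrix.one_apply]
  ring

def Pdet (W : E2 → E2) (t : ℝ) (x : E2) : ℝ :=
  1 + t * (jac W x).trace + t ^ 2 * (jac W x).det

def Gfun (W : E2 → E2) (ψ : ℝ × E2 → ℝ) (v : ℝ × E2 → E2) (t : ℝ) (x : E2) : ℝ :=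
  ψ (t, x + t • W x) * Tdiv (fderiv ℝ v (t, x + t • W x)) * Pdet W t x

def Gder (W : E2 → E2) (ψ : ℝ × E2 → ℝ) (v : ℝ × E2 → E2) (t : ℝ) (x : E2) : ℝ :=
  fderiv ℝ ψ (t, x + t • W x) (1, W x) * Tdiv (fderiv ℝ v (t, x + t • W x)) * Pdet W t x
  + ψ (t, x + t • W x) * Tdiv (fderiv ℝ (fderiv ℝ v) (t, x + t • W x) (1, W x)) * Pdet W t x
  + ψ (t, x + t • W x) * Tdiv (fderiv ℝ v (t, x + t • W x))
      * ((jac W x).trace + 2 * t * (jac W x).det)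

lemma hasDerivAt_curve (W : E2 → E2) (x : E2) (t : ℝ) :
    HasDerivAt (fun s : ℝ => ((s : ℝ), x + s • W x)) ((1 : ℝ), W x) t := by
  have h2 : HasDerivAt (fun s : ℝ => x + s • W x) (W x) t := by
    simpa using ((hasDerivAt_id t).smul_const (W x))
  exact HasDerivAt.prodMk (hasDerivAt_id t) h2

lemma hasDerivAt_Pdet (W : E2 → E2) (x : E2) (t : ℝ) :
    HasDerivAt (fun s => Pdet W s x) ((jac W x).trace + 2 * t * (jac W x).det) t := by
  have h : HasDerivAt (fun s : ℝ => 1 + s * (jac W x).trace + s ^ 2 * (jac W x).det)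
      (0 + 1 * (jac W x).trace + (2 : ℕ) * t ^ (2 - 1) * (jac W x).det) t :=
    ((hasDerivAt_const t 1).add ((hasDerivAt_id t).mul_const _)).add
      ((hasDerivAt_pow 2 t).mul_const _)
  have h2 := h.congr_deriv (by push_cast; ring :
    (0 : ℝ) + 1 * (jac W x).trace + (2 : ℕ) * t ^ (2 - 1) * (jac W x).det
      = (jac W x).trace + 2 * t * (jac W x).det)
  simpa [Pdet] using h2

lemma hasDerivAt_Gfun (W : E2 → E2) (ψ : ℝ × E2 → ℝ) (v : ℝ × E2 → E2)
    (hψ : ContDiff ℝ 2 ψ) (hv : ContDiff ℝ 2 v) (t : ℝ) (x : E2) :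
    HasDerivAt (fun s => Gfun W ψ v s x) (Gder W ψ v t x) t := by
  have hc := hasDerivAt_curve W x t
  have ha : HasDerivAt (fun s : ℝ => ψ (s, x + s • W x))
      (fderiv ℝ ψ (t, x + t • W x) ((1 : ℝ), W x)) t :=
    ((hψ.differentiable (by norm_num)) _).hasFDerivAt.comp_hasDerivAt t hc
  have hBdiff : Differentiable ℝ (fderiv ℝ v) :=
    (hv.fderiv_right (m := 1) (by norm_num)).differentiable one_ne_zero
  have hb0 : HasDerivAt (fun s : ℝ => fderiv ℝ v (s, x + s • W x))
      (fderiv ℝ (fderiv ℝ v) (t, x + t • W x) ((1 : ℝ), W x)) t :=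
    (hBdiff _).hasFDerivAt.comp_hasDerivAt t hc
  have hb : HasDerivAt (fun s : ℝ => Tdiv (fderiv ℝ v (s, x + s • W x)))
      (Tdiv (fderiv ℝ (fderiv ℝ v) (t, x + t • W x) ((1 : ℝ), W x))) t :=
    Tdiv.hasFDerivAt.comp_hasDerivAt t hb0
  have hP := hasDerivAt_Pdet W x t
  have h := (ha.mul hb).mul hP
  refine h.congr_deriv ?_
  simp only [Gder, Gfun, Pi.mul_apply]
  ring


lemma vdot_closed (W : E2 → E2) (v : ℝ × E2 → E2) (hv : ContDiff ℝ 2 v)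
    (vdot : E2 → E2)
    (hvdot : vdot = fun z => deriv (fun t : ℝ => v (t, z + t • W z)) 0) :
    vdot = fun z => fderiv ℝ v ((0 : ℝ), z) ((1 : ℝ), W z) := by
  rw [hvdot]; funext z
  have h : HasDerivAt (fun t : ℝ => v (t, z + t • W z))
      (fderiv ℝ v ((0:ℝ), z + (0:ℝ) • W z) ((1:ℝ), W z)) 0 :=
    ((hv.differentiable (by norm_num)) _).hasFDerivAt.comp_hasDerivAt 0
      (hasDerivAt_curve W z 0)
  rw [h.deriv]
  simp

lemma key_divergence (W : E2 → E2) (hW : ContDiff ℝ 1 W)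
    (v : ℝ × E2 → E2) (hv : ContDiff ℝ 2 v)
    (v₀ vdot : E2 → E2)
    (hv₀ : v₀ = fun z => v ((0 : ℝ), z))
    (hvdot : vdot = fun z => deriv (fun t : ℝ => v (t, z + t • W z)) 0)
    (x : E2) :
    Tdiv (fderiv ℝ (fderiv ℝ v) ((0 : ℝ), x) ((1 : ℝ), W x))
      = divg vdot x - frob (jac v₀ x).transpose (jac W x) := by
  classical
  have hWd : Differentiable ℝ W := hW.differentiable one_ne_zero
  have hvd : Differentiable ℝ v := hv.differentiable (by norm_num)
  have hBdiff : Differentiable ℝ (fderiv ℝ v) :=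
    (hv.fderiv_right (m := 1) (by norm_num)).differentiable one_ne_zero
  have hvdot' := vdot_closed W v hv vdot hvdot
  -- fderiv of vdot
  set L : E2 →L[ℝ] E2 :=
      ((fderiv ℝ v ((0:ℝ), x)).comp
        (((0 : E2 →L[ℝ] ℝ)).prod (fderiv ℝ W x)))
      + ((fderiv ℝ (fderiv ℝ v) ((0:ℝ), x)).comp
          (ContinuousLinearMap.inr ℝ ℝ E2)).flip ((1:ℝ), W x) with hL
  have hc : HasFDerivAt (fun z : E2 => fderiv ℝ v ((0:ℝ), z))
      ((fderiv ℝ (fderiv ℝ v) ((0:ℝ), x)).comp (ContinuousLinearMap.inr ℝ ℝ E2)) x :=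
    (hBdiff ((0:ℝ), x)).hasFDerivAt.comp x
      (HasFDerivAt.prodMk (hasFDerivAt_const (0:ℝ) x) (hasFDerivAt_id x))
  have hu : HasFDerivAt (fun z : E2 => ((1:ℝ), W z))
      (((0 : E2 →L[ℝ] ℝ)).prod (fderiv ℝ W x)) x :=
    HasFDerivAt.prodMk (hasFDerivAt_const (1:ℝ) x) (hWd x).hasFDerivAt
  have hvdotF : HasFDerivAt vdot L x := by
    rw [hvdot', hL]
    exact hc.clm_apply hu
  have hfd : fderiv ℝ vdot x = L := hvdotF.fderiv
  -- divergence of vdot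
  have hdivvdot : divg vdot x
      = ∑ j : Fin 2, (fderiv ℝ v ((0:ℝ), x)
            ((0:ℝ), fderiv ℝ W x (EuclideanSpace.single j 1))) j
        + ∑ j : Fin 2, (fderiv ℝ (fderiv ℝ v) ((0:ℝ), x)
            ((0:ℝ), EuclideanSpace.single j 1) ((1:ℝ), W x)) j := by
    simp only [divg, jac, Matrix.trace, Matrix.diag, Matrix.of_apply, hfd, hL]
    rw [← Finset.sum_add_distrib]
    congr 1
  -- symmetry of second derivative
  have hsymm : IsSymmSndFDerivAt ℝ v ((0:ℝ), x) :=
    (hv.contDiffAt).isSymmSndFDerivAt (by simp [minSmoothness_of_isRCLikeNormedField])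
  have hswap : ∀ j : Fin 2,
      (fderiv ℝ (fderiv ℝ v) ((0:ℝ), x) ((0:ℝ), EuclideanSpace.single j 1) ((1:ℝ), W x))
        = (fderiv ℝ (fderiv ℝ v) ((0:ℝ), x) ((1:ℝ), W x) ((0:ℝ), EuclideanSpace.single j 1)) :=
    fun j => hsymm _ _
  -- first sum is the Frobenius term
  have hfrob : ∑ j : Fin 2, (fderiv ℝ v ((0:ℝ), x)
        ((0:ℝ), fderiv ℝ W x (EuclideanSpace.single j 1))) j
      = frob (jac v₀ x).transpose (jac W x) := by
    have hexp : ∀ j : Fin 2, ((0:ℝ), fderiv ℝ W x (EuclideanSpace.single j 1))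
        = ∑ k : Fin 2, jac W x k j • (((0:ℝ), EuclideanSpace.single k 1) : ℝ × E2) := by
      intro j
      rw [Prod.ext_iff]
      constructor
      · simp
      · simp only [Prod.snd_sum, Prod.smul_snd]
        ext i
        simp only [jac, Matrix.of_apply, PiLp.smul_apply, Finset.sum_apply, smul_eq_mul,
          EuclideanSpace.single_apply, Fin.sum_univ_two]
        fin_cases i <;> simp
    have hjv₀ : ∀ j k : Fin 2, jac v₀ x j k
        = (fderiv ℝ v ((0:ℝ), x) ((0:ℝ), EuclideanSpace.single k 1)) j := by
      intro j k
      simp only [jac, Matrix.of_apply, hv₀]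
      rw [fderiv_slice v hvd 0 x]
      rfl
    calc ∑ j : Fin 2, (fderiv ℝ v ((0:ℝ), x)
          ((0:ℝ), fderiv ℝ W x (EuclideanSpace.single j 1))) j
        = ∑ j : Fin 2, ∑ k : Fin 2, jac W x k j
            * (fderiv ℝ v ((0:ℝ), x) ((0:ℝ), EuclideanSpace.single k 1)) j := by
          refine Finset.sum_congr rfl fun j _ => ?_
          rw [hexp j, map_sum]
          have hsm : ∀ (a : ℝ) (u : E2), ((0:ℝ), a • u) = a • (((0:ℝ), u) : ℝ × E2) := by
            intro a u; rw [Prod.smul_mk, smul_zero]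
          simp only [hsm, ContinuousLinearMap.map_smul, Fin.sum_univ_two, PiLp.add_apply, PiLp.smul_apply,
            smul_eq_mul]
      _ = frob (jac v₀ x).transpose (jac W x) := by
          simp only [frob, Matrix.transpose_apply]
          rw [Finset.sum_comm]
          refine Finset.sum_congr rfl fun k _ => Finset.sum_congr rfl fun j _ => ?_
          rw [hjv₀]
          ring
  rw [Tdiv_apply, hdivvdot, hfrob]
  have : ∑ j : Fin 2, (fderiv ℝ (fderiv ℝ v) ((0:ℝ), x)
      ((0:ℝ), EuclideanSpace.single j 1) ((1:ℝ), W x)) j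
    = ∑ j : Fin 2, (fderiv ℝ (fderiv ℝ v) ((0:ℝ), x)
      ((1:ℝ), W x) ((0:ℝ), EuclideanSpace.single j 1)) j := by
    refine Finset.sum_congr rfl fun j _ => ?_
    rw [hswap j]
  rw [this]
  ring

lemma Gder_zero (W : E2 → E2) (hW : ContDiff ℝ 1 W)
    (ψ : ℝ × E2 → ℝ) (v : ℝ × E2 → E2)
    (hψ : ContDiff ℝ 2 ψ) (hv : ContDiff ℝ 2 v)
    (ψ₀ ψdot : E2 → ℝ) (v₀ vdot : E2 → E2)
    (hψ₀ : ψ₀ = fun z => ψ ((0 : ℝ), z))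
    (hψdot : ψdot = fun z => deriv (fun t : ℝ => ψ (t, z + t • W z)) 0)
    (hv₀ : v₀ = fun z => v ((0 : ℝ), z))
    (hvdot : vdot = fun z => deriv (fun t : ℝ => v (t, z + t • W z)) 0)
    (x : E2) :
    Gder W ψ v 0 x
      = ψdot x * divg v₀ x + ψ₀ x * divg vdot x
        - ψ₀ x * frob (jac v₀ x).transpose (jac W x)
        + divg W x * (ψ₀ x * divg v₀ x) := by
  have hvd : Differentiable ℝ v := hv.differentiable (by norm_num)
  have h0 : ((0:ℝ), x + (0:ℝ) • W x) = ((0:ℝ), x) := by simp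
  have hP0 : Pdet W 0 x = 1 := by simp [Pdet]
  have hdivv₀ : Tdiv (fderiv ℝ v ((0:ℝ), x)) = divg v₀ x := by
    rw [hv₀, divg_slice v hvd 0 x]
  have hψd : fderiv ℝ ψ ((0:ℝ), x) ((1:ℝ), W x) = ψdot x := by
    rw [hψdot]
    beta_reduce
    have h : HasDerivAt (fun t : ℝ => ψ (t, x + t • W x))
        (fderiv ℝ ψ ((0:ℝ), x + (0:ℝ) • W x) ((1:ℝ), W x)) 0 :=
      ((hψ.differentiable (by norm_num)) _).hasFDerivAt.comp_hasDerivAt 0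
        (hasDerivAt_curve W x 0)
    rw [h.deriv, h0]
  have hkey := key_divergence W hW v hv v₀ vdot hv₀ hvdot x
  have hψ0 : ψ ((0:ℝ), x) = ψ₀ x := by rw [hψ₀]
  have hdivW : (jac W x).trace = divg W x := rfl
  simp only [Gder, h0, hP0, hψd, hdivv₀, hkey, hψ0, hdivW]
  ring


lemma cov_step (W : E2 → E2) (hW : ContDiff ℝ 1 W)
    (ψ : ℝ × E2 → ℝ) (v : ℝ × E2 → E2) (hv : ContDiff ℝ 2 v)
    (Δ : Set E2) (hΔm : MeasurableSet Δ)
    (t K : ℝ) (hK0 : 0 ≤ K) (hK : LipschitzWith K.toNNReal W) (htK : |t| * K < 1)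
    (hpos : ∀ x : E2, 0 < Pdet W t x) :
    ∫ y in (fun x => x + t • W x) '' Δ, ψ (t, y) * divg (fun z => v (t, z)) y
      = ∫ x in Δ, Gfun W ψ v t x := by
  have hWd : Differentiable ℝ W := hW.differentiable one_ne_zero
  have hvd : Differentiable ℝ v := hv.differentiable (by norm_num)
  set f' : E2 → E2 →L[ℝ] E2 := fun x => ContinuousLinearMap.id ℝ E2 + t • fderiv ℝ W x
    with hf'def
  have hf' : ∀ x ∈ Δ, HasFDerivWithinAt (fun x => x + t • W x) (f' x) Δ x := by
    intro x _
    exact ((hasFDerivAt_id x).add ((hWd x).hasFDerivAt.const_smul t)).hasFDerivWithinAt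
  have hinj : Set.InjOn (fun x => x + t • W x) Δ := by
    intro x _ y _ hxy
    by_contra hne
    simp only at hxy
    have h1 : x - y = t • W y - t • W x :=
      sub_eq_sub_iff_add_eq_add.mpr (by rw [hxy]; abel)
    have hb : ‖W y - W x‖ ≤ K * ‖x - y‖ := by
      have := hK.dist_le_mul y x
      rw [Real.coe_toNNReal K hK0, dist_eq_norm] at this
      calc ‖W y - W x‖ ≤ K * ‖y - x‖ := this
        _ = K * ‖x - y‖ := by rw [norm_sub_rev]
    have h2 : ‖x - y‖ ≤ |t| * (K * ‖x - y‖) := by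
      calc ‖x - y‖ = |t| * ‖W y - W x‖ := by
            rw [h1, ← smul_sub, norm_smul, Real.norm_eq_abs]
        _ ≤ |t| * (K * ‖x - y‖) := mul_le_mul_of_nonneg_left hb (abs_nonneg t)
    have h3 : 0 < ‖x - y‖ := by
      rw [norm_pos_iff, sub_ne_zero]
      exact hne
    nlinarith
  rw [MeasureTheory.integral_image_eq_integral_abs_det_fderiv_smul volume hΔm hf' hinj]
  refine setIntegral_congr_fun hΔm fun x _ => ?_
  have hdet : (f' x).det = Pdet W t x := by
    rw [hf'def]
    simpa [Pdet] using det_perturb W hWd t x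
  rw [hdet, abs_of_pos (hpos x), smul_eq_mul, Gfun,
    divg_slice v hvd t (x + t • W x)]
  ring

lemma cont_jacW (W : E2 → E2) (hW : ContDiff ℝ 1 W) (i j : Fin 2) :
    Continuous fun x => jac W x i j := by
  have h : Continuous fun x => fderiv ℝ W x (EuclideanSpace.single j 1) :=
    (hW.continuous_fderiv one_ne_zero).clm_apply continuous_const
  exact (EuclideanSpace.proj i).continuous.comp h

lemma cont_trW (W : E2 → E2) (hW : ContDiff ℝ 1 W) :
    Continuous fun x => (jac W x).trace := by
  simp only [Matrix.trace_fin_two]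
  exact (cont_jacW W hW 0 0).add (cont_jacW W hW 1 1)

lemma cont_detW (W : E2 → E2) (hW : ContDiff ℝ 1 W) :
    Continuous fun x => (jac W x).det := by
  simp only [Matrix.det_fin_two]
  exact ((cont_jacW W hW 0 0).mul (cont_jacW W hW 1 1)).sub
    ((cont_jacW W hW 0 1).mul (cont_jacW W hW 1 0))

lemma cont_curve (W : E2 → E2) (hW : ContDiff ℝ 1 W) :
    Continuous fun p : ℝ × E2 => ((p.1 : ℝ), p.2 + p.1 • W p.2) :=
  continuous_fst.prodMk
    (continuous_snd.add (continuous_fst.smul (hW.continuous.comp continuous_snd)))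

lemma cont_Gfun (W : E2 → E2) (hW : ContDiff ℝ 1 W)
    (ψ : ℝ × E2 → ℝ) (v : ℝ × E2 → E2) (hψ : ContDiff ℝ 2 ψ) (hv : ContDiff ℝ 2 v) :
    Continuous fun p : ℝ × E2 => Gfun W ψ v p.1 p.2 := by
  have hc := cont_curve W hW
  have h1 : Continuous fun p : ℝ × E2 => ψ (p.1, p.2 + p.1 • W p.2) :=
    hψ.continuous.comp hc
  have h2 : Continuous fun p : ℝ × E2 => Tdiv (fderiv ℝ v (p.1, p.2 + p.1 • W p.2)) :=
    Tdiv.continuous.comp (((hv.fderiv_right (m := 1) (by norm_num)).continuous).comp hc)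
  have h3 : Continuous fun p : ℝ × E2 => Pdet W p.1 p.2 := by
    unfold Pdet
    exact (continuous_const.add
      (continuous_fst.mul ((cont_trW W hW).comp continuous_snd))).add
      ((continuous_fst.pow 2).mul ((cont_detW W hW).comp continuous_snd))
  exact (h1.mul h2).mul h3

lemma cont_Gder (W : E2 → E2) (hW : ContDiff ℝ 1 W)
    (ψ : ℝ × E2 → ℝ) (v : ℝ × E2 → E2) (hψ : ContDiff ℝ 2 ψ) (hv : ContDiff ℝ 2 v) :
    Continuous fun p : ℝ × E2 => Gder W ψ v p.1 p.2 := by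
  have hc := cont_curve W hW
  have hWv : Continuous fun p : ℝ × E2 => (((1:ℝ), W p.2) : ℝ × E2) :=
    continuous_const.prodMk (hW.continuous.comp continuous_snd)
  have h1 : Continuous fun p : ℝ × E2 => ψ (p.1, p.2 + p.1 • W p.2) :=
    hψ.continuous.comp hc
  have h2 : Continuous fun p : ℝ × E2 => Tdiv (fderiv ℝ v (p.1, p.2 + p.1 • W p.2)) :=
    Tdiv.continuous.comp (((hv.fderiv_right (m := 1) (by norm_num)).continuous).comp hc)
  have h3 : Continuous fun p : ℝ × E2 => Pdet W p.1 p.2 := by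
    unfold Pdet
    exact (continuous_const.add
      (continuous_fst.mul ((cont_trW W hW).comp continuous_snd))).add
      ((continuous_fst.pow 2).mul ((cont_detW W hW).comp continuous_snd))
  have h4 : Continuous fun p : ℝ × E2 => fderiv ℝ ψ (p.1, p.2 + p.1 • W p.2) ((1:ℝ), W p.2) :=
    (((hψ.fderiv_right (m := 1) (by norm_num)).continuous).comp hc).clm_apply hWv
  have h5 : Continuous fun p : ℝ × E2 =>
      Tdiv (fderiv ℝ (fderiv ℝ v) (p.1, p.2 + p.1 • W p.2) ((1:ℝ), W p.2)) :=
    Tdiv.continuous.comp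
      ((((hv.fderiv_right (m := 1) (by norm_num)).continuous_fderiv one_ne_zero).comp hc).clm_apply hWv)
  have h6 : Continuous fun p : ℝ × E2 =>
      (jac W p.2).trace + 2 * p.1 * (jac W p.2).det :=
    ((cont_trW W hW).comp continuous_snd).add
      ((continuous_const.mul continuous_fst).mul ((cont_detW W hW).comp continuous_snd))
  unfold Gder
  exact (((h4.mul h2).mul h3).add ((h1.mul h5).mul h3)).add ((h1.mul h2).mul h6)

lemma exists_lip (W : E2 → E2) (hW : ContDiff ℝ 1 W) (hWc : HasCompactSupport W) :
    ∃ K : ℝ, 0 ≤ K ∧ LipschitzWith K.toNNReal W := by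
  obtain ⟨C0, hC0⟩ := (hW.continuous_fderiv one_ne_zero).bounded_above_of_compact_support (hWc.fderiv (𝕜 := ℝ))
  refine ⟨max C0 0, le_max_right _ _, ?_⟩
  apply lipschitzWith_of_nnnorm_fderiv_le (hW.differentiable one_ne_zero)
  intro x
  rw [← NNReal.coe_le_coe, coe_nnnorm, Real.coe_toNNReal _ (le_max_right C0 0)]
  exact (hC0 x).trans (le_max_left _ _)

lemma exists_M (W : E2 → E2) (hW : ContDiff ℝ 1 W) (hWc : HasCompactSupport W) :
    ∃ M : ℝ, 0 ≤ M ∧ (∀ x, |(jac W x).trace| ≤ M) ∧ ∀ x, |(jac W x).det| ≤ M := by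
  have hcs : HasCompactSupport (fderiv ℝ W) := hWc.fderiv (𝕜 := ℝ)
  have h1 : HasCompactSupport fun x => (jac W x).trace := by
    have : (fun x => (jac W x).trace)
        = (fun L : E2 →L[ℝ] E2 =>
            Matrix.trace (Matrix.of fun i j => L (EuclideanSpace.single j 1) i))
          ∘ fderiv ℝ W := rfl
    rw [this]
    exact hcs.comp_left (by simp [Matrix.trace])
  have h2 : HasCompactSupport fun x => (jac W x).det := by
    have : (fun x => (jac W x).det)
        = (fun L : E2 →L[ℝ] E2 =>
            Matrix.det (Matrix.of fun i j => L (EuclideanSpace.single j 1) i))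
          ∘ fderiv ℝ W := rfl
    rw [this]
    exact hcs.comp_left (by simp [Matrix.det_fin_two])
  obtain ⟨C1, hC1⟩ := (cont_trW W hW).bounded_above_of_compact_support h1
  obtain ⟨C2, hC2⟩ := (cont_detW W hW).bounded_above_of_compact_support h2
  refine ⟨max (max C1 C2) 0, le_max_right _ _, fun x => ?_, fun x => ?_⟩
  · exact (hC1 x).trans ((le_max_left C1 C2).trans (le_max_left _ _))
  · exact (hC2 x).trans ((le_max_right C1 C2).trans (le_max_left _ _))

lemma Pdet_pos (W : E2 → E2) (M : ℝ) (hM0 : 0 ≤ M)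
    (hMa : ∀ x, |(jac W x).trace| ≤ M) (hMb : ∀ x, |(jac W x).det| ≤ M)
    (t : ℝ) (ht : |t| ≤ 1 / (4 * (M + 1))) (x : E2) : 0 < Pdet W t x := by
  have ha := abs_le.mp (hMa x)
  have hb := abs_le.mp (hMb x)
  have ht' := abs_le.mp ht
  have htn : 0 ≤ |t| := abs_nonneg t
  have hM1 : (0:ℝ) < 4 * (M + 1) := by positivity
  have h1 : |t| * M ≤ 1 / 4 := by
    have hstep := mul_le_mul_of_nonneg_right ht hM0
    have h2 : (1 / (4 * (M + 1))) * M ≤ 1 / 4 := by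
      rw [div_mul_eq_mul_div, div_le_div_iff₀ hM1 (by norm_num)]
      nlinarith
    linarith
  have ht1 : |t| ≤ 1 / 4 := by
    have h3 : (1:ℝ) / (4 * (M + 1)) ≤ 1 / 4 :=
      one_div_le_one_div_of_le (by norm_num) (by nlinarith)
    linarith
  have h2 : t * (jac W x).trace ≥ -(1/4) := by
    nlinarith [neg_abs_le t, le_abs_self t]
  have h3 : t ^ 2 * (jac W x).det ≥ -(1/4) := by
    nlinarith [sq_abs t, sq_nonneg t]
  simp only [Pdet]
  nlinarith

theorem shape_derivative_L6'
    (W : EuclideanSpace ℝ (Fin 2) → EuclideanSpace ℝ (Fin 2))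
    (hW : ContDiff ℝ 1 W) (hWc : HasCompactSupport W)
    (Δ : Set (EuclideanSpace ℝ (Fin 2))) (hΔm : MeasurableSet Δ)
    (hΔb : Bornology.IsBounded Δ)
    (ψ : ℝ × EuclideanSpace ℝ (Fin 2) → ℝ)
    (v : ℝ × EuclideanSpace ℝ (Fin 2) → EuclideanSpace ℝ (Fin 2))
    (hψ : ContDiff ℝ 2 ψ) (hv : ContDiff ℝ 2 v)
    (ψ₀ ψdot : EuclideanSpace ℝ (Fin 2) → ℝ)
    (v₀ vdot : EuclideanSpace ℝ (Fin 2) → EuclideanSpace ℝ (Fin 2))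
    (hψ₀ : ψ₀ = fun z => ψ ((0 : ℝ), z))
    (hψdot : ψdot = fun z => deriv (fun t : ℝ => ψ (t, z + t • W z)) 0)
    (hv₀ : v₀ = fun z => v ((0 : ℝ), z))
    (hvdot : vdot = fun z => deriv (fun t : ℝ => v (t, z + t • W z)) 0) :
    HasDerivAt
      (fun t : ℝ => ∫ y in (fun x => x + t • W x) '' Δ,
        ψ (t, y) * divg (fun z => v (t, z)) y)
      (∫ x in Δ,
        (ψdot x * divg v₀ x
          + ψ₀ x * divg vdot x
          - ψ₀ x * frob (jac v₀ x).transpose (jac W x)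
          + divg W x * (ψ₀ x * divg v₀ x))) (0 : ℝ) := by
  obtain ⟨K, hK0, hK⟩ := exists_lip W hW hWc
  obtain ⟨M, hM0, hMa, hMb⟩ := exists_M W hW hWc
  set ε : ℝ := min (1 / (2 * (K + 1))) (1 / (4 * (M + 1))) with hεdef
  have hε : 0 < ε := lt_min (by positivity) (by positivity)
  have hballK : ∀ t : ℝ, |t| < ε → |t| * K < 1 := by
    intro t ht
    have h1 : |t| < 1 / (2 * (K + 1)) := lt_of_lt_of_le ht (min_le_left _ _)
    have := abs_nonneg t
    rw [div_eq_inv_mul, lt_inv_mul_iff₀ (by positivity)] at h1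
    nlinarith [mul_le_mul_of_nonneg_left hK0 this]
  have hballP : ∀ t : ℝ, |t| < ε → ∀ x : E2, 0 < Pdet W t x := fun t ht =>
    Pdet_pos W M hM0 hMa hMb t (le_of_lt (lt_of_lt_of_le ht (min_le_right _ _)))
  -- compact bound for the derivative
  have hKc : IsCompact ((Set.Icc (-ε) ε) ×ˢ closure Δ) :=
    isCompact_Icc.prod hΔb.isCompact_closure
  obtain ⟨C, hC⟩ := hKc.exists_bound_of_continuousOn
    ((cont_Gder W hW ψ v hψ hv).continuousOn)
  have hbound : ∀ᵐ x ∂(volume.restrict Δ), ∀ t ∈ Metric.ball (0:ℝ) ε,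
      ‖Gder W ψ v t x‖ ≤ C := by
    filter_upwards [ae_restrict_mem hΔm] with x hx
    intro t ht
    have ht' : |t| < ε := by simpa [Real.dist_eq] using Metric.mem_ball.mp ht
    have habs := abs_le.mp (le_of_lt ht')
    exact hC (t, x) ⟨Set.mem_Icc.mpr ⟨habs.1, habs.2⟩, subset_closure hx⟩
  have hcont0 : Continuous fun x : E2 => Gfun W ψ v 0 x :=
    (cont_Gfun W hW ψ v hψ hv).comp (Continuous.prodMk_right (0:ℝ))
  have hint : Integrable (fun x : E2 => Gfun W ψ v 0 x) (volume.restrict Δ) :=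
    (hcont0.continuousOn.integrableOn_compact hΔb.isCompact_closure).mono_set
      subset_closure
  -- dominated differentiation
  have hmain := hasDerivAt_integral_of_dominated_loc_of_deriv_le
    (μ := volume.restrict Δ) (F := fun t x => Gfun W ψ v t x)
    (F' := fun t x => Gder W ψ v t x) (x₀ := (0 : ℝ)) (bound := fun _ => C)
    (Metric.ball_mem_nhds 0 hε)
    (Filter.Eventually.of_forall fun t =>
      ((cont_Gfun W hW ψ v hψ hv).comp (Continuous.prodMk_right t)).aestronglyMeasurable)
    hint
    ((cont_Gder W hW ψ v hψ hv).comp (Continuous.prodMk_right (0:ℝ))).aestronglyMeasurable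
    (hbound)
    (integrableOn_const
      ((measure_mono subset_closure).trans_lt hΔb.isCompact_closure.measure_lt_top).ne)
    (Filter.Eventually.of_forall fun x t _ => hasDerivAt_Gfun W ψ v hψ hv t x)
  have hval : (∫ x in Δ, Gder W ψ v 0 x)
      = ∫ x in Δ, (ψdot x * divg v₀ x + ψ₀ x * divg vdot x
          - ψ₀ x * frob (jac v₀ x).transpose (jac W x)
          + divg W x * (ψ₀ x * divg v₀ x)) :=
    setIntegral_congr_fun hΔm fun x _ =>
      Gder_zero W hW ψ v hψ hv ψ₀ ψdot v₀ vdot hψ₀ hψdot hv₀ hvdot x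
  have hder := hmain.2
  rw [hval] at hder
  refine hder.congr_of_eventuallyEq ?_
  filter_upwards [Metric.ball_mem_nhds (0:ℝ) hε] with t ht
  have ht' : |t| < ε := by simpa [Real.dist_eq] using Metric.mem_ball.mp ht
  exact cov_step W hW ψ v hv Δ hΔm t K hK0 hK (hballK t ht') (hballP t ht')

/-- Shape derivative of the incompressibility term
`t ↦ ∫_{F_t(Δ)} ψ(t,·) div(v(t,·)) dy`. -/
theorem shape_derivative_L6
    (W : EuclideanSpace ℝ (Fin 2) → EuclideanSpace ℝ (Fin 2))
    (hW : ContDiff ℝ 1 W) (hWc : HasCompactSupport W)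
    (Δ : Set (EuclideanSpace ℝ (Fin 2))) (hΔm : MeasurableSet Δ)
    (hΔb : Bornology.IsBounded Δ)
    (ψ : ℝ × EuclideanSpace ℝ (Fin 2) → ℝ)
    (v : ℝ × EuclideanSpace ℝ (Fin 2) → EuclideanSpace ℝ (Fin 2))
    (hψ : ContDiff ℝ 2 ψ) (hv : ContDiff ℝ 2 v)
    (ψ₀ ψdot : EuclideanSpace ℝ (Fin 2) → ℝ)
    (v₀ vdot : EuclideanSpace ℝ (Fin 2) → EuclideanSpace ℝ (Fin 2))
    (hψ₀ : ψ₀ = fun z => ψ ((0 : ℝ), z))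
    (hψdot : ψdot = fun z => deriv (fun t : ℝ => ψ (t, z + t • W z)) 0)
    (hv₀ : v₀ = fun z => v ((0 : ℝ), z))
    (hvdot : vdot = fun z => deriv (fun t : ℝ => v (t, z + t • W z)) 0) :
    HasDerivAt
      (fun t : ℝ => ∫ y in (fun x => x + t • W x) '' Δ,
        ψ (t, y) * divg (fun z => v (t, z)) y)
      (∫ x in Δ,
        (ψdot x * divg v₀ x
          + ψ₀ x * divg vdot x
          - ψ₀ x * frob (jac v₀ x).transpose (jac W x)
          + divg W x * (ψ₀ x * divg v₀ x))) (0 : ℝ) := by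
  exact shape_derivative_L6' W hW hWc Δ hΔm hΔb ψ v hψ hv ψ₀ ψdot v₀ vdot hψ₀ hψdot hv₀ hvdot

end
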